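/- Let p ≥ 1, β > 0, let A and C be real p×p skew-symmetric matrices and B ∈ ℝ^{p×p}. Define the 2p×2p block matrices L = [[A, −Bᵀ],[B, C]] and X = [[2βA, −Bᵀ],[B, C]]. Then ‖X‖₂ ≤ (1 + |2β−1|)·‖L‖₂ and ‖L‖₂ ≤ (1 + |2β−1|/(2β))·‖X‖₂. -/
import Mathlib


open Matrix

/-- Spectral norm: operator norm induced by the Euclidean vector norm. -/
noncomputable def specNorm {m n : Type*} [Fintype m] [Fintype n] [DecidableEq n]
    (M : Matrix m n ℝ) : ℝ :=
  ‖LinearMap.toContinuousLinearMap (Matrix.toEuclideanLin M)‖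

open scoped Matrix.Norms.L2Operator in
lemma specNorm_eq_norm {m n : Type*} [Fintype m] [Fintype n] [DecidableEq n]
    (M : Matrix m n ℝ) : specNorm M = ‖M‖ := rfl

theorem norm_comparison_L_X (p : ℕ) (hp : 1 ≤ p) (β : ℝ) (hβ : 0 < β)
    (A B C : Matrix (Fin p) (Fin p) ℝ) (hA : Aᵀ = -A) (hC : Cᵀ = -C)
    (L X : Matrix (Fin p ⊕ Fin p) (Fin p ⊕ Fin p) ℝ)
    (hL : L = Matrix.fromBlocks A (-Bᵀ) B C)
    (hX : X = Matrix.fromBlocks ((2 * β) • A) (-Bᵀ) B C) :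
    specNorm X ≤ (1 + |2 * β - 1|) * specNorm L ∧
      specNorm L ≤ (1 + |2 * β - 1| / (2 * β)) * specNorm X := by
  open scoped Matrix.Norms.L2Operator in
  simp only [specNorm_eq_norm]
  set P : Matrix (Fin p ⊕ Fin p) (Fin p ⊕ Fin p) ℝ := Matrix.fromBlocks 1 0 0 0 with hP
  set D : Matrix (Fin p ⊕ Fin p) (Fin p ⊕ Fin p) ℝ := Matrix.fromBlocks A 0 0 0 with hD
  have hPP : Pᴴ * P = P := by
    simp [hP, Matrix.fromBlocks_multiply, Matrix.fromBlocks_conjTranspose,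
      Matrix.fromBlocks_transpose]
  have hPnorm : ‖P‖ ≤ 1 := by
    have h := Matrix.l2_opNorm_conjTranspose_mul_self P
    rw [hPP] at h
    nlinarith [norm_nonneg P]
  have hcomp : ∀ M : Matrix (Fin p ⊕ Fin p) (Fin p ⊕ Fin p) ℝ, ‖P * M * P‖ ≤ ‖M‖ := by
    intro M
    calc ‖P * M * P‖ ≤ ‖P * M‖ * ‖P‖ := Matrix.l2_opNorm_mul _ _
    _ ≤ ‖P * M‖ * 1 := mul_le_mul_of_nonneg_left hPnorm (norm_nonneg _)
    _ = ‖P * M‖ := mul_one _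
    _ ≤ ‖P‖ * ‖M‖ := Matrix.l2_opNorm_mul _ _
    _ ≤ 1 * ‖M‖ := mul_le_mul_of_nonneg_right hPnorm (norm_nonneg _)
    _ = ‖M‖ := one_mul _
  have hPLP : P * L * P = D := by
    simp [hP, hD, hL, Matrix.fromBlocks_multiply]
  have hPXP : P * X * P = (2 * β) • D := by
    rw [hP, hD, hX, Matrix.fromBlocks_smul]
    simp [Matrix.fromBlocks_multiply]
  have hDL : ‖D‖ ≤ ‖L‖ := hPLP ▸ hcomp L
  have hDX : (2 * β) * ‖D‖ ≤ ‖X‖ := by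
    have h1 : ‖(2 * β) • D‖ = |2 * β| * ‖D‖ := by
      rw [norm_smul, Real.norm_eq_abs]
    have h2 : ‖P * X * P‖ ≤ ‖X‖ := hcomp X
    rw [hPXP, h1] at h2
    rw [abs_of_pos (by linarith)] at h2
    exact h2
  have hXLD : X = L + (2 * β - 1) • D := by
    rw [hL, hX, hD]
    ext (i | i) (j | j) <;>
      simp [Matrix.add_apply, Matrix.smul_apply, Matrix.fromBlocks] <;> ring
  constructor
  · calc ‖X‖ ≤ ‖L‖ + ‖(2 * β - 1) • D‖ := by rw [hXLD]; exact norm_add_le _ _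
    _ = ‖L‖ + |2 * β - 1| * ‖D‖ := by rw [norm_smul]; simp [Real.norm_eq_abs]
    _ ≤ ‖L‖ + |2 * β - 1| * ‖L‖ := by
        have := abs_nonneg (2 * β - 1)
        nlinarith
    _ = (1 + |2 * β - 1|) * ‖L‖ := by ring
  · have hL' : L = X - (2 * β - 1) • D := by rw [hXLD]; abel
    have hDX' : ‖D‖ ≤ ‖X‖ / (2 * β) := by
      rw [le_div_iff₀ (by linarith)]
      linarith [hDX]
    calc ‖L‖ ≤ ‖X‖ + ‖(2 * β - 1) • D‖ := by rw [hL']; exact norm_sub_le _ _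
    _ = ‖X‖ + |2 * β - 1| * ‖D‖ := by rw [norm_smul]; simp [Real.norm_eq_abs]
    _ ≤ ‖X‖ + |2 * β - 1| * (‖X‖ / (2 * β)) := by
        have := abs_nonneg (2 * β - 1)
        nlinarith
    _ = (1 + |2 * β - 1| / (2 * β)) * ‖X‖ := by ring
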